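/- arXiv:2107.09139 — 2 statements merged into one kernel-verified Lean document; each statement's English description precedes it below -/
import Mathlib

section
/- Equality constraints on the policy can be exactly enforced for one gradient-flow step: fix an episode time e₀ and let A ∈ ℝ^{n_S×n_S} with A_{ij} = ⟨∇π^S_i(θ(e₀)), ∇π^S_j(θ(e₀))⟩ · (π^S_j(θ(e₀)))⁻¹ and B ∈ ℝ^{n_S×N} with B_{ij} = ⟨∇π^S_i(θ(e₀)), ∇π^B_j(θ(e₀))⟩ · (π^B_j(θ(e₀)))⁻¹. If A is invertible, then for every prescribed policy change Δπ ∈ ℝ^{n_S} there exists a unique safe return vector G_s ∈ ℝ^{n_S}, namely G_s = A⁻¹(Δπ − B Ĝ), such that the gradient flow driven by the concatenated returns (Ĝ, G_s) satisfies d/de [π^S_i(θ(e))]|_{e=e₀} = Δπ_i for every i ∈ {1,…,n_S}. -/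
open scoped RealInnerProductSpace

/-- Equality constraints on the policy can be exactly enforced for one
gradient-flow step: with `A i j = ⟪∇π^S_i(θ₀), ∇π^S_j(θ₀)⟫ (π^S_j(θ₀))⁻¹` and
`B i j = ⟪∇π^S_i(θ₀), ∇π^B_j(θ₀)⟫ (π^B_j(θ₀))⁻¹`, if `A` is invertible then for every
prescribed policy change `Δπ` there is a unique safe return vector `G_s`, namely
`G_s = A⁻¹ (Δπ − B Ĝ)`, such that the gradient flow driven by the concatenated returns
`(Ĝ, G_s)` satisfies `d/de π^S_i(θ(e))|_{e = e₀} = Δπ_i` for all `i`. -/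
theorem equality_constraints_unique_safe_returns
    (nθ N nS : ℕ)
    -- the policy network evaluated at the `N` batch state–action pairs
    (polB : EuclideanSpace ℝ (Fin nθ) → Fin N → ℝ)
    (hpolB : ∀ j : Fin N, ContDiff ℝ 1 (fun θ => polB θ j))
    -- the policy network evaluated at the `nS` safe state–action pairs
    (polS : EuclideanSpace ℝ (Fin nθ) → Fin nS → ℝ)
    (hpolS : ∀ i : Fin nS, ContDiff ℝ 1 (fun θ => polS θ i))
    -- the fixed (masked) batch returns
    (Ghat : Fin N → ℝ)
    -- the episode time and the parameters at that time
    (e₀ : ℝ) (θ₀ : EuclideanSpace ℝ (Fin nθ))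
    -- for every safe return vector `Gs`, the parameter curve of the gradient flow
    -- driven by the concatenated returns `(Ghat, Gs)`, passing through `θ₀` at `e₀`
    (θ : (Fin nS → ℝ) → ℝ → EuclideanSpace ℝ (Fin nθ))
    (hθ : ∀ Gs, Differentiable ℝ (θ Gs))
    (hθ₀ : ∀ Gs, θ Gs e₀ = θ₀)
    (hflow : ∀ (Gs : Fin nS → ℝ) (e : ℝ), deriv (θ Gs) e =
      (∑ j : Fin N,
        Ghat j • (polB (θ Gs e) j)⁻¹ • gradient (fun θ' => polB θ' j) (θ Gs e)) +
      ∑ i : Fin nS,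
        Gs i • (polS (θ Gs e) i)⁻¹ • gradient (fun θ' => polS θ' i) (θ Gs e))
    -- strict positivity of all policy components along the flows
    (hposB : ∀ (Gs : Fin nS → ℝ) (e : ℝ) (j : Fin N), 0 < polB (θ Gs e) j)
    (hposS : ∀ (Gs : Fin nS → ℝ) (e : ℝ) (i : Fin nS), 0 < polS (θ Gs e) i)
    -- the NTK-based matrices `A` and `B` evaluated at `θ₀`
    (A : Matrix (Fin nS) (Fin nS) ℝ)
    (hA : ∀ i j : Fin nS, A i j =
      ⟪gradient (fun θ' => polS θ' i) θ₀, gradient (fun θ' => polS θ' j) θ₀⟫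
        * (polS θ₀ j)⁻¹)
    (B : Matrix (Fin nS) (Fin N) ℝ)
    (hB : ∀ (i : Fin nS) (j : Fin N), B i j =
      ⟪gradient (fun θ' => polS θ' i) θ₀, gradient (fun θ' => polB θ' j) θ₀⟫
        * (polB θ₀ j)⁻¹)
    (hAinv : IsUnit A)
    -- the prescribed policy change at the safe state–action pairs
    (Δπ : Fin nS → ℝ) :
    (∀ i : Fin nS,
      deriv (fun e => polS (θ (A⁻¹.mulVec (Δπ - B.mulVec Ghat)) e) i) e₀ = Δπ i) ∧
    (∀ Gs : Fin nS → ℝ,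
      (∀ i : Fin nS, deriv (fun e => polS (θ Gs e) i) e₀ = Δπ i) →
        Gs = A⁻¹.mulVec (Δπ - B.mulVec Ghat)) := by
  classical
  have hAd : IsUnit A.det := (Matrix.isUnit_iff_isUnit_det A).mp hAinv
  have key : ∀ (Gs : Fin nS → ℝ) (i : Fin nS),
      deriv (fun e => polS (θ Gs e) i) e₀ = B.mulVec Ghat i + A.mulVec Gs i := by
    intro Gs i
    have hθd : HasDerivAt (θ Gs) (deriv (θ Gs) e₀) e₀ := ((hθ Gs) e₀).hasDerivAt
    have hgrad : HasGradientAt (fun θ' => polS θ' i)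
        (gradient (fun θ' => polS θ' i) θ₀) (θ Gs e₀) := by
      rw [hθ₀]
      exact (((hpolS i).differentiable one_ne_zero) θ₀).hasGradientAt
    have hcomp : HasDerivAt (fun e => polS (θ Gs e) i)
        (((InnerProductSpace.toDual ℝ (EuclideanSpace ℝ (Fin nθ)))
          (gradient (fun θ' => polS θ' i) θ₀)) (deriv (θ Gs) e₀)) e₀ :=
      hgrad.hasFDerivAt.comp_hasDerivAt e₀ hθd
    rw [hcomp.deriv, InnerProductSpace.toDual_apply_apply, hflow Gs e₀, hθ₀,
      inner_add_right]
    simp only [Matrix.mulVec, dotProduct]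
    congr 1
    · rw [inner_sum]
      refine Finset.sum_congr rfl fun j _ => ?_
      rw [real_inner_smul_right, real_inner_smul_right, hB]
      ring
    · rw [inner_sum]
      refine Finset.sum_congr rfl fun k _ => ?_
      rw [real_inner_smul_right, real_inner_smul_right, hA]
      ring
  set G₀ : Fin nS → ℝ := A⁻¹.mulVec (Δπ - B.mulVec Ghat) with hG₀
  have hAG₀ : A.mulVec G₀ = Δπ - B.mulVec Ghat := by
    rw [hG₀, Matrix.mulVec_mulVec, Matrix.mul_nonsing_inv A hAd, Matrix.one_mulVec]
  constructor
  · intro i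
    rw [key G₀ i, hAG₀]
    simp
  · intro Gs hGs
    have hAGs : A.mulVec Gs = Δπ - B.mulVec Ghat := by
      funext i
      have := hGs i
      rw [key Gs i] at this
      simp only [Pi.sub_apply]
      linarith
    calc Gs = (A⁻¹ * A).mulVec Gs := by
            rw [Matrix.nonsing_inv_mul A hAd, Matrix.one_mulVec]
      _ = A⁻¹.mulVec (A.mulVec Gs) := by rw [Matrix.mulVec_mulVec]
      _ = G₀ := by rw [hAGs]
end

section
/- Inequality constraints on the policy change are enforced by any feasible safe return vector: fix an episode time e₀ and let A ∈ ℝ^{n_S×n_S} with A_{ij} = ⟨∇π^S_i(θ(e₀)), ∇π^S_j(θ(e₀))⟩ · (π^S_j(θ(e₀)))⁻¹ and B ∈ ℝ^{n_S×N} with B_{ij} = ⟨∇π^S_i(θ(e₀)), ∇π^B_j(θ(e₀))⟩ · (π^B_j(θ(e₀)))⁻¹. If the safe return vector G_s ∈ ℝ^{n_S} satisfies the componentwise inequality Δπ − B Ĝ ≤ A G_s for a prescribed vector Δπ ∈ ℝ^{n_S}, then the gradient flow driven by the concatenated returns (Ĝ, G_s) satisfies d/de [π^S_i(θ(e))]|_{e=e₀}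 ≥ Δπ_i for every i ∈ {1,…,n_S}. -/
open scoped RealInnerProductSpace

/-- Inequality constraints on the policy change are enforced by any
feasible safe return vector: with `A i j = ⟪∇π^S_i(θ₀), ∇π^S_j(θ₀)⟫ (π^S_j(θ₀))⁻¹` and
`B i j = ⟪∇π^S_i(θ₀), ∇π^B_j(θ₀)⟫ (π^B_j(θ₀))⁻¹`, if the safe return vector `G_s`
satisfies the componentwise inequality `Δπ − B Ĝ ≤ A G_s`, then the gradient flow driven
by the concatenated returns `(Ĝ, G_s)` satisfies `d/de π^S_i(θ(e))|_{e = e₀} ≥ Δπ_i`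
for every `i`. -/
theorem inequality_constraints_enforced_by_feasible_safe_returns
    (nθ N nS : ℕ)
    -- the policy network evaluated at the `N` batch state–action pairs
    (polB : EuclideanSpace ℝ (Fin nθ) → Fin N → ℝ)
    (hpolB : ∀ j : Fin N, ContDiff ℝ 1 (fun θ => polB θ j))
    -- the policy network evaluated at the `nS` safe state–action pairs
    (polS : EuclideanSpace ℝ (Fin nθ) → Fin nS → ℝ)
    (hpolS : ∀ i : Fin nS, ContDiff ℝ 1 (fun θ => polS θ i))
    -- the fixed (masked) batch returns and the safe return vector
    (Ghat : Fin N → ℝ) (Gs : Fin nS → ℝ)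
    -- the episode time and the parameters at that time
    (e₀ : ℝ) (θ₀ : EuclideanSpace ℝ (Fin nθ))
    -- the parameter curve of the gradient flow driven by the concatenated
    -- returns `(Ghat, Gs)`, passing through `θ₀` at `e₀`
    (θ : ℝ → EuclideanSpace ℝ (Fin nθ))
    (hθ : Differentiable ℝ θ)
    (hθ₀ : θ e₀ = θ₀)
    (hflow : ∀ e : ℝ, deriv θ e =
      (∑ j : Fin N,
        Ghat j • (polB (θ e) j)⁻¹ • gradient (fun θ' => polB θ' j) (θ e)) +
      ∑ i : Fin nS,
        Gs i • (polS (θ e) i)⁻¹ • gradient (fun θ' => polS θ' i) (θ e))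
    -- strict positivity of all policy components along the flow
    (hposB : ∀ (e : ℝ) (j : Fin N), 0 < polB (θ e) j)
    (hposS : ∀ (e : ℝ) (i : Fin nS), 0 < polS (θ e) i)
    -- the NTK-based matrices `A` and `B` evaluated at `θ₀`
    (A : Matrix (Fin nS) (Fin nS) ℝ)
    (hA : ∀ i j : Fin nS, A i j =
      ⟪gradient (fun θ' => polS θ' i) θ₀, gradient (fun θ' => polS θ' j) θ₀⟫
        * (polS θ₀ j)⁻¹)
    (B : Matrix (Fin nS) (Fin N) ℝ)
    (hB : ∀ (i : Fin nS) (j : Fin N), B i j =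
      ⟪gradient (fun θ' => polS θ' i) θ₀, gradient (fun θ' => polB θ' j) θ₀⟫
        * (polB θ₀ j)⁻¹)
    -- the prescribed policy change and the feasibility of `Gs`
    (Δπ : Fin nS → ℝ)
    (hfeas : ∀ i : Fin nS, Δπ i - B.mulVec Ghat i ≤ A.mulVec Gs i) :
    ∀ i : Fin nS, Δπ i ≤ deriv (fun e => polS (θ e) i) e₀ := by
  intro i
  have hdS : ∀ k : Fin nS, DifferentiableAt ℝ (fun θ' => polS θ' k) θ₀ :=
    fun k => ((hpolS k).differentiable one_ne_zero).differentiableAt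
  -- the key fact: fderiv applied to v equals inner with gradient
  have hfd : ∀ (f : EuclideanSpace ℝ (Fin nθ) → ℝ) (v : EuclideanSpace ℝ (Fin nθ)),
      fderiv ℝ f θ₀ v = ⟪gradient f θ₀, v⟫ := by
    intro f v
    rw [gradient, InnerProductSpace.toDual_symm_apply]
  -- chain rule
  have hθd : HasDerivAt θ (deriv θ e₀) e₀ := (hθ e₀).hasDerivAt
  have hF : HasFDerivAt (fun θ' => polS θ' i) (fderiv ℝ (fun θ' => polS θ' i) θ₀) (θ e₀) := by
    rw [hθ₀]; exact (hdS i).hasFDerivAt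
  have hc : HasDerivAt (fun e => polS (θ e) i)
      (fderiv ℝ (fun θ' => polS θ' i) θ₀ (deriv θ e₀)) e₀ := hF.comp_hasDerivAt e₀ hθd
  rw [hc.deriv, hfd, hflow, hθ₀]
  have expand : ⟪gradient (fun θ' => polS θ' i) θ₀,
      (∑ j : Fin N, Ghat j • (polB θ₀ j)⁻¹ • gradient (fun θ' => polB θ' j) θ₀) +
      ∑ k : Fin nS, Gs k • (polS θ₀ k)⁻¹ • gradient (fun θ' => polS θ' k) θ₀⟫
      = B.mulVec Ghat i + A.mulVec Gs i := by
    rw [inner_add_right, inner_sum, inner_sum]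
    congr 1
    · rw [Matrix.mulVec, dotProduct]
      refine Finset.sum_congr rfl fun j _ => ?_
      rw [real_inner_smul_right, real_inner_smul_right, hB]
      ring
    · rw [Matrix.mulVec, dotProduct]
      refine Finset.sum_congr rfl fun k _ => ?_
      rw [real_inner_smul_right, real_inner_smul_right, hA]
      ring
  rw [expand]
  linarith [hfeas i]
end
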